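/- Let K ≥ 2 be an integer and let a_1, …, a_K be fixed positive reals with a_0 = a_1 + ⋯ + a_K. Then, as t → ∞, t · [ (ψ(t·a_0 + 1) − Σ_{k=1}^K (a_k/a_0)·ψ(t·a_k + 1)) − ( −Σ_{k=1}^K (a_k/a_0)·log(a_k/a_0) − (K−1)/(2·t·a_0) ) ] → 0. In particular the posterior expected entropy ψ(t a_0 + 1) − Σ_k (a_k/a_0) ψ(t a_k + 1) of a Dirichlet distribution equals the plug-in entropy −Σ_k (a_k/a_0) log(a_k/a_0) minus (K−1)/(2 t a_0), up to an error of order o(1/t). -/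

import Mathlib

open Real Filter Finset

/-- The digamma function: derivative of `log ∘ Γ`. -/
noncomputable def digamma (x : ℝ) : ℝ := deriv (fun y => Real.log (Real.Gamma y)) x

namespace DigammaAux

open Set

lemma hder {x : ℝ} (hx : 0 < x) :
    DifferentiableAt ℝ (fun y => Real.log (Real.Gamma y)) x := by
  refine ((Real.differentiableAt_Gamma ?_).log (Real.Gamma_ne_zero ?_)) <;>
  exact fun m => ((neg_nonpos.mpr (Nat.cast_nonneg m)).trans_lt hx).ne'

lemma h_rec {x : ℝ} (hx : 0 < x) :
    Real.log (Real.Gamma (x + 1)) = Real.log (Real.Gamma x) + Real.log x := by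
  rw [Real.Gamma_add_one hx.ne', Real.log_mul hx.ne' (Real.Gamma_pos_of_pos hx).ne', add_comm]

lemma digamma_add_one {x : ℝ} (hx : 0 < x) : digamma (x + 1) = digamma x + 1 / x := by
  unfold digamma
  rw [← deriv_comp_add_const, one_div, ← Real.deriv_log,
    ← deriv_add (hder hx) (Real.differentiableAt_log hx.ne')]
  apply Filter.EventuallyEq.deriv_eq
  filter_upwards [eventually_gt_nhds hx] with y hy using h_rec hy

lemma log_le_digamma {x : ℝ} (hx : 0 < x) : Real.log x ≤ digamma (x + 1) := by
  refine (le_of_eq ?_).trans <| Real.convexOn_log_Gamma.slope_le_deriv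
    (mem_Ioi.mpr hx) (mem_Ioi.mpr (by linarith)) (by linarith) (hder (by linarith))
  simp only [slope_def_field, Function.comp_apply]
  rw [show x + 1 - x = (1 : ℝ) by ring, div_one, h_rec hx, add_sub_cancel_left]

lemma digamma_le_log {x : ℝ} (hx : 0 < x) : digamma (x + 1) ≤ Real.log (x + 1) := by
  refine (Real.convexOn_log_Gamma.deriv_le_slope (mem_Ioi.mpr (by linarith : (0:ℝ) < x + 1))
    (mem_Ioi.mpr (by linarith : (0:ℝ) < x + 2)) (by linarith) (hder (by linarith))).trans
    (le_of_eq ?_)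
  simp only [slope_def_field, Function.comp_apply]
  rw [show x + 2 - (x + 1) = (1 : ℝ) by ring, div_one,
    show x + 2 = (x + 1) + 1 by ring, h_rec (by linarith : (0:ℝ) < x + 1), add_sub_cancel_left]

end DigammaAux

namespace DigammaAux

open Set

/-- The error in the second-order asymptotic of digamma. -/
noncomputable def A (x : ℝ) : ℝ := digamma (x + 1) - Real.log x - 1 / (2 * x)

lemma abs_A_le {x : ℝ} (hx : 0 < x) : |A x| ≤ 1 / x := by
  have h1 := log_le_digamma hx
  have h2 := digamma_le_log hx
  have h3 : Real.log (x + 1) - Real.log x ≤ 1 / x := by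
    rw [← Real.log_div (by linarith) hx.ne']
    have := Real.log_le_sub_one_of_pos (show (0:ℝ) < (x+1)/x by positivity)
    calc Real.log ((x+1)/x) ≤ (x+1)/x - 1 := this
      _ = 1 / x := by field_simp; ring
  rw [abs_le]
  constructor
  · unfold A
    have : 1 / (2 * x) ≤ 1 / x := by
      apply div_le_div_of_nonneg_left one_pos.le hx; linarith
    linarith
  · unfold A
    have : 0 < 1 / (2 * x) := by positivity
    linarith

lemma A_step {x : ℝ} (hx : 0 < x) : A (x + 1) - A x
    = 1 / (x + 1) - (Real.log (x + 1) - Real.log x) + (1 / (2 * x) - 1 / (2 * (x + 1))) := by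
  unfold A
  rw [digamma_add_one (by linarith : (0:ℝ) < x + 1)]
  ring

lemma abs_A_step_le {x : ℝ} (hx : 2 ≤ x) : |A (x + 1) - A x| ≤ 3 / x ^ 3 := by
  have hx0 : 0 < x := by linarith
  set u : ℝ := 1 / x with hu
  have hu0 : 0 < u := by positivity
  have hu2 : u ≤ 1 / 2 := by
    rw [hu]; rw [div_le_div_iff₀ hx0 two_pos]; linarith
  have habs : |(-u)| < 1 := by rw [abs_neg, abs_of_pos hu0]; linarith
  have key := Real.abs_log_sub_add_sum_range_le habs 2
  have hsum : (∑ i ∈ Finset.range 2, (-u) ^ (i + 1) / (i + 1)) = -u + u ^ 2 / 2 := by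
    simp [Finset.sum_range_succ]; ring
  rw [hsum, show (1 : ℝ) - -u = 1 + u by ring] at key
  have hE : |Real.log (1 + u) - u + u ^ 2 / 2| ≤ 2 * u ^ 3 := by
    have h1 : |(-u)| ^ (2 + 1) / (1 - |(-u)|) ≤ 2 * u ^ 3 := by
      rw [abs_neg, abs_of_pos hu0]
      rw [div_le_iff₀ (by linarith), show (2:ℕ) + 1 = 3 from rfl]
      nlinarith [mul_nonneg (pow_pos hu0 3).le (by linarith : (0:ℝ) ≤ 1 - 2 * u)]
    calc |Real.log (1 + u) - u + u ^ 2 / 2| = |(-u + u ^ 2 / 2) + Real.log (1 + u)| := by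
          ring_nf
      _ ≤ 2 * u ^ 3 := key.trans h1
  have hlog : Real.log (x + 1) - Real.log x = Real.log (1 + u) := by
    have hq : (x + 1) / x = 1 + u := by rw [hu]; field_simp
    rw [← Real.log_div (by linarith) hx0.ne', hq]
  rw [A_step hx0, hlog]
  have hiden : 1 / (x + 1) + (1 / (2 * x) - 1 / (2 * (x + 1))) - (u - u ^ 2 / 2)
      = 1 / (2 * x ^ 2 * (x + 1)) := by
    rw [hu]; field_simp; ring
  have : 1 / (x + 1) - Real.log (1 + u) + (1 / (2 * x) - 1 / (2 * (x + 1)))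
      = -(Real.log (1 + u) - u + u ^ 2 / 2) + 1 / (2 * x ^ 2 * (x + 1)) := by
    rw [← hiden]; ring
  rw [this]
  calc |(-(Real.log (1 + u) - u + u ^ 2 / 2) + 1 / (2 * x ^ 2 * (x + 1)))|
      ≤ |Real.log (1 + u) - u + u ^ 2 / 2| + |1 / (2 * x ^ 2 * (x + 1))| := by
        rw [abs_neg] at *; exact (abs_add_le _ _).trans (by rw [abs_neg])
    _ ≤ 2 * u ^ 3 + 1 / (2 * x ^ 2 * (x + 1)) := by
        have : |1 / (2 * x ^ 2 * (x + 1))| = 1 / (2 * x ^ 2 * (x + 1)) :=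
          abs_of_pos (by positivity)
        rw [this]; linarith
    _ ≤ 3 / x ^ 3 := by
        rw [hu, div_pow, one_pow, mul_one_div,
          div_add_div _ _ (by positivity) (by positivity),
          div_le_div_iff₀ (by positivity) (by positivity)]
        nlinarith [pow_pos hx0 5, pow_pos hx0 6, pow_pos hx0 3]

lemma abs_A_tele (N : ℕ) {x : ℝ} (hx : 2 ≤ x) :
    |A (x + N) - A x| ≤ 3 / x * (1 / (x - 1) - 1 / (x + N - 1)) := by
  induction N with
  | zero => simp
  | succ N ih =>
    have hx0 : 0 < x := by linarith
    have hN : (0:ℝ) ≤ N := Nat.cast_nonneg N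
    have hy : 2 ≤ x + N := by linarith
    have hstep := abs_A_step_le hy
    have hrw : x + ((N:ℕ)+1 : ℕ) = (x + N) + 1 := by push_cast; ring
    have h1 : |A (x + ((N:ℕ)+1 : ℕ)) - A x| ≤ |A ((x + N) + 1) - A (x + N)| + |A (x + N) - A x| := by
      rw [hrw]
      calc |A (x + N + 1) - A x| = |(A (x + N + 1) - A (x + N)) + (A (x + N) - A x)| := by ring_nf
        _ ≤ _ := abs_add_le _ _
    have h2 : 3 / (x + N) ^ 3 ≤ 3 / x * (1 / (x + N - 1) - 1 / (x + N)) := by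
      have hp : (0:ℝ) < x + N - 1 := by linarith
      have hq : (0:ℝ) < x + N := by linarith
      have e : 1 / (x + N - 1) - 1 / (x + N) = 1 / ((x + N - 1) * (x + N)) := by
        rw [div_sub_div _ _ hp.ne' hq.ne',
          show (1 * (x + (N:ℝ)) - (x + (N:ℝ) - 1) * 1) = 1 by ring]
      rw [e, div_mul_div_comm, mul_one]
      apply div_le_div_of_nonneg_left (by norm_num) (by positivity)
      have expand : (x + (N:ℝ)) ^ 3 - x * ((x + (N:ℝ) - 1) * (x + (N:ℝ)))
          = (x + (N:ℝ)) * ((N:ℝ) * (N:ℝ) + x * (N:ℝ) + x) := by ring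
      nlinarith [mul_nonneg hq.le (by nlinarith [mul_nonneg hN hN, mul_nonneg hx0.le hN] :
        (0:ℝ) ≤ (N:ℝ) * (N:ℝ) + x * (N:ℝ) + x)]
    calc |A (x + ((N:ℕ)+1 : ℕ)) - A x|
        ≤ 3 / (x + N) ^ 3 + 3 / x * (1 / (x - 1) - 1 / (x + N - 1)) := by
          have := h1.trans (add_le_add hstep ih); linarith
      _ ≤ 3 / x * (1 / (x + N - 1) - 1 / (x + N)) + 3 / x * (1 / (x - 1) - 1 / (x + N - 1)) := by
          linarith
      _ = 3 / x * (1 / (x - 1) - 1 / (x + ((N:ℕ)+1 : ℕ) - 1)) := by push_cast; ring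

lemma abs_A_le_sq {x : ℝ} (hx : 2 ≤ x) : |A x| ≤ 6 / x ^ 2 := by
  have hx0 : 0 < x := by linarith
  have key : ∀ N : ℕ, |A x| ≤ 1 / (x + N) + 3 / x * (1 / (x - 1)) := by
    intro N
    have hN : (0:ℝ) ≤ N := Nat.cast_nonneg N
    have h1 : |A (x + N)| ≤ 1 / (x + N) := abs_A_le (by linarith)
    have h2 := abs_A_tele N hx
    have h3 : |A x| ≤ |A (x + N)| + |A (x + N) - A x| := by
      calc |A x| = |A (x + N) - (A (x + N) - A x)| := by ring_nf
        _ ≤ |A (x + N)| + |A (x + N) - A x| := abs_sub _ _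
    have h4 : (0:ℝ) ≤ 1 / (x + N - 1) := le_of_lt (by apply div_pos one_pos; linarith)
    have h5 : 3 / x * (1 / (x - 1) - 1 / (x + N - 1)) ≤ 3 / x * (1 / (x - 1)) := by
      apply mul_le_mul_of_nonneg_left _ (div_nonneg (by norm_num) hx0.le)
      linarith
    linarith
  have hlim : Tendsto (fun N : ℕ => 1 / (x + N) + 3 / x * (1 / (x - 1))) atTop
      (nhds (3 / x * (1 / (x - 1)))) := by
    have h0 : Tendsto (fun N : ℕ => x + (N:ℝ)) atTop atTop :=
      tendsto_atTop_add_const_left _ x tendsto_natCast_atTop_atTop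
    have h1 : Tendsto (fun N : ℕ => 1 / (x + (N:ℝ))) atTop (nhds 0) := by
      simpa [one_div, Pi.inv_def] using h0.inv_tendsto_atTop
    simpa using h1.add_const (3 / x * (1 / (x - 1)))
  have hle : |A x| ≤ 3 / x * (1 / (x - 1)) := ge_of_tendsto' hlim key
  have : 3 / x * (1 / (x - 1)) ≤ 6 / x ^ 2 := by
    rw [div_mul_div_comm, mul_one, div_le_div_iff₀ (by nlinarith) (by positivity)]
    nlinarith
  linarith

lemma tendsto_mul_A {c : ℝ} (hc : 0 < c) :
    Tendsto (fun t : ℝ => t * A (t * c)) atTop (nhds 0) := by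
  apply squeeze_zero_norm' (a := fun t : ℝ => 6 / (c ^ 2 * t))
  · filter_upwards [eventually_ge_atTop (2 / c), eventually_gt_atTop (0:ℝ)] with t ht ht0
    have htc : 2 ≤ t * c := by
      rw [div_le_iff₀ hc] at ht; linarith
    have h1 : |A (t * c)| ≤ 6 / (t * c) ^ 2 := abs_A_le_sq htc
    have : ‖t * A (t * c)‖ = t * |A (t * c)| := by
      rw [norm_mul, Real.norm_eq_abs, Real.norm_eq_abs, abs_of_pos ht0]
    rw [this]
    calc t * |A (t * c)| ≤ t * (6 / (t * c) ^ 2) := by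
          apply mul_le_mul_of_nonneg_left h1 ht0.le
      _ = 6 / (c ^ 2 * t) := by field_simp
  · have h0 : Tendsto (fun t : ℝ => c ^ 2 * t) atTop atTop :=
      (tendsto_id.const_mul_atTop (by positivity))
    have := h0.inv_tendsto_atTop
    simpa [div_eq_mul_inv] using this.const_mul (6:ℝ)

end DigammaAux

/-- asymptotic form of Lemma 1. -/
theorem expected_entropy_asymptotic (K : ℕ) (hK : 2 ≤ K) (a : Fin K → ℝ)
    (ha : ∀ k, 0 < a k) (a0 : ℝ) (ha0 : a0 = ∑ k, a k) :
    Tendsto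
      (fun t : ℝ =>
        t * ((digamma (t * a0 + 1) - ∑ k, (a k / a0) * digamma (t * a k + 1))
          - (-∑ k, (a k / a0) * Real.log (a k / a0) - ((K : ℝ) - 1) / (2 * t * a0))))
      atTop (nhds 0) := by
  haveI : NeZero K := ⟨by omega⟩
  have hne : (Finset.univ : Finset (Fin K)).Nonempty := Finset.univ_nonempty
  have ha0pos : 0 < a0 := by
    rw [ha0]; exact Finset.sum_pos (fun k _ => ha k) hne
  have hsum1 : ∑ k, a k / a0 = 1 := by
    rw [← Finset.sum_div, ← ha0, div_self ha0pos.ne']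
  have main : Tendsto (fun t : ℝ => t * DigammaAux.A (t * a0)
      - ∑ k, (a k / a0) * (t * DigammaAux.A (t * a k))) atTop (nhds 0) := by
    have h0 := DigammaAux.tendsto_mul_A ha0pos
    have hk : Tendsto (fun t : ℝ => ∑ k, (a k / a0) * (t * DigammaAux.A (t * a k)))
        atTop (nhds 0) := by
      have := tendsto_finset_sum (Finset.univ : Finset (Fin K))
        (fun k (_ : k ∈ Finset.univ) => (DigammaAux.tendsto_mul_A (ha k)).const_mul (a k / a0))
      simpa using this
    simpa using h0.sub hk
  refine main.congr' ?_
  filter_upwards [eventually_gt_atTop (0:ℝ)] with t ht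
  have hdig : ∀ c : ℝ, 0 < c → digamma (t * c + 1)
      = DigammaAux.A (t * c) + (Real.log t + Real.log c) + 1 / (2 * (t * c)) := by
    intro c hc
    have : Real.log (t * c) = Real.log t + Real.log c := Real.log_mul ht.ne' hc.ne'
    unfold DigammaAux.A
    rw [← this]
    ring
  have hterm : ∀ k : Fin K, (a k / a0) * digamma (t * a k + 1)
      = (a k / a0) * DigammaAux.A (t * a k) + (a k / a0) * Real.log t
        + (a k / a0) * Real.log (a k) + 1 / (2 * t * a0) := by
    intro k
    have hlast : (a k / a0) * (1 / (2 * (t * a k))) = 1 / (2 * t * a0) := by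
      have h1 : a k ≠ 0 := (ha k).ne'
      have h2 : a0 ≠ 0 := ha0pos.ne'
      have h3 : t ≠ 0 := ht.ne'
      field_simp
    rw [hdig (a k) (ha k)]
    rw [mul_add, mul_add, hlast, mul_add]
    ring
  have e1 : ∑ k, (a k / a0) * digamma (t * a k + 1)
      = (∑ k, (a k / a0) * DigammaAux.A (t * a k)) + Real.log t
        + (∑ k, (a k / a0) * Real.log (a k)) + (K : ℝ) * (1 / (2 * t * a0)) := by
    rw [Finset.sum_congr rfl fun k _ => hterm k, Finset.sum_add_distrib,
      Finset.sum_add_distrib, Finset.sum_add_distrib, ← Finset.sum_mul, hsum1, one_mul,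
      Finset.sum_const, Finset.card_univ, Fintype.card_fin, nsmul_eq_mul]
  have e2 : ∑ k, (a k / a0) * Real.log (a k / a0)
      = (∑ k, (a k / a0) * Real.log (a k)) - Real.log a0 := by
    have h : ∀ k : Fin K, (a k / a0) * Real.log (a k / a0)
        = (a k / a0) * Real.log (a k) - (a k / a0) * Real.log a0 := by
      intro k; rw [Real.log_div (ha k).ne' ha0pos.ne']; ring
    rw [Finset.sum_congr rfl fun k _ => h k, Finset.sum_sub_distrib,
      ← Finset.sum_mul, hsum1, one_mul]
  have e3 : ∑ k, (a k / a0) * (t * DigammaAux.A (t * a k))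
      = t * ∑ k, (a k / a0) * DigammaAux.A (t * a k) := by
    rw [Finset.mul_sum]; exact Finset.sum_congr rfl fun k _ => by ring
  rw [hdig a0 ha0pos, e1, e2, e3]
  have h2 : a0 ≠ 0 := ha0pos.ne'
  have h3 : t ≠ 0 := ht.ne'
  field_simp
  ring
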